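/- Donsker–Varadhan representation (finite case): let P and Q be probability mass functions on a finite nonempty set α with Q(i) > 0 for all i. Then the supremum over all functions x : α → ℝ of the quantity Σ_i P(i)·x(i) − log( Σ_i Q(i)·e^{x(i)} ) equals D_KL(P ‖ Q); i.e. ⨆_{x : α → ℝ} ( E_P[x] − log E_Q[e^x] ) = D_KL(P ‖ Q). -/

import Mathlib

open Finset

/-- KL divergence between two finitely supported distributions, with the
convention that terms with `p i = 0` contribute `0`. -/
noncomputable def klDiv {α : Type*} [Fintype α] (p q : α → ℝ) : ℝ :=
  ∑ i, if 0 < p i then p i * Real.log (p i / q i) else 0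

theorem donsker_varadhan_representation {α : Type*} [Fintype α] [Nonempty α]
    (P Q : α → ℝ)
    (hP_nonneg : ∀ i, 0 ≤ P i) (hP_sum : ∑ i, P i = 1)
    (hQ_pos : ∀ i, 0 < Q i) (hQ_sum : ∑ i, Q i = 1) :
    (⨆ x : α → ℝ, (∑ i, P i * x i - Real.log (∑ i, Q i * Real.exp (x i)))) =
      klDiv P Q := by
  set f : (α → ℝ) → ℝ :=
    fun x => ∑ i, P i * x i - Real.log (∑ i, Q i * Real.exp (x i)) with hf
  have hQexp_pos : ∀ x : α → ℝ, 0 < ∑ i, Q i * Real.exp (x i) := fun x =>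
    Finset.sum_pos (fun i _ => mul_pos (hQ_pos i) (Real.exp_pos _)) univ_nonempty
  -- Upper bound: f x ≤ klDiv P Q for all x
  have hub : ∀ x : α → ℝ, f x ≤ klDiv P Q := by
    intro x
    set y : α → ℝ := fun i => x i + Real.log (Q i) - Real.log (P i) with hy
    have jensen := convexOn_exp.map_sum_le (t := univ) (w := P) (p := y)
      (fun i _ => hP_nonneg i) hP_sum (fun i _ => Set.mem_univ _)
    simp only [smul_eq_mul] at jensen
    have h1 : ∑ i, P i * Real.exp (y i) ≤ ∑ i, Q i * Real.exp (x i) := by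
      apply Finset.sum_le_sum
      intro i _
      rcases (hP_nonneg i).lt_or_eq with hPi | hPi
      · have : P i * Real.exp (y i) = Q i * Real.exp (x i) := by
          rw [hy]
          rw [Real.exp_sub, Real.exp_add, Real.exp_log (hQ_pos i),
            Real.exp_log hPi]
          field_simp
        rw [this]
      · rw [← hPi, zero_mul]
        exact le_of_lt (mul_pos (hQ_pos i) (Real.exp_pos _))
    have h2 : Real.exp (∑ i, P i * y i) ≤ ∑ i, Q i * Real.exp (x i) :=
      jensen.trans h1
    have h3 : ∑ i, P i * y i ≤ Real.log (∑ i, Q i * Real.exp (x i)) := by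
      rw [Real.le_log_iff_exp_le (hQexp_pos x)]; exact h2
    have h4 : ∑ i, P i * y i =
        ∑ i, P i * x i - klDiv P Q := by
      rw [klDiv, ← Finset.sum_sub_distrib]
      apply Finset.sum_congr rfl
      intro i _
      rcases (hP_nonneg i).lt_or_eq with hPi | hPi
      · simp only [hPi, if_pos]
        rw [hy, Real.log_div (ne_of_gt hPi) (ne_of_gt (hQ_pos i))]
        ring
      · simp [← hPi]
    rw [h4] at h3
    rw [hf]
    dsimp only
    linarith
  have hbdd : BddAbove (Set.range f) := ⟨klDiv P Q, by rintro _ ⟨x, rfl⟩; exact hub x⟩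
  apply le_antisymm (ciSup_le hub)
  -- Lower bound
  apply le_of_forall_pos_le_add
  intro ε hε
  set t : ℝ := -Real.log ε with ht
  set x : α → ℝ := fun i => if 0 < P i then Real.log (P i / Q i) else -t with hx
  have hsum1 : ∑ i, P i * x i = klDiv P Q := by
    rw [klDiv]
    apply Finset.sum_congr rfl
    intro i _
    rcases (hP_nonneg i).lt_or_eq with hPi | hPi
    · simp [hx, hPi]
    · simp [hx, ← hPi]
  set c : ℝ := ∑ i ∈ univ.filter (fun i => ¬ 0 < P i), Q i with hc
  have hc_nonneg : 0 ≤ c := Finset.sum_nonneg fun i _ => (hQ_pos i).le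
  have hsum2 : ∑ i, Q i * Real.exp (x i) = 1 + c * Real.exp (-t) := by
    rw [← Finset.sum_filter_add_sum_filter_not univ (fun i => 0 < P i)]
    have e1 : ∑ i ∈ univ.filter (fun i => 0 < P i), Q i * Real.exp (x i) = 1 := by
      rw [← hP_sum, ← Finset.sum_filter_add_sum_filter_not univ (fun i => 0 < P i) P]
      have e2 : ∑ i ∈ univ.filter (fun i => ¬ 0 < P i), P i = 0 := by
        apply Finset.sum_eq_zero
        intro i hi
        simp only [Finset.mem_filter] at hi
        exact le_antisymm (not_lt.mp hi.2) (hP_nonneg i)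
      rw [e2, add_zero]
      apply Finset.sum_congr rfl
      intro i hi
      simp only [Finset.mem_filter] at hi
      rw [hx]
      simp only [hi.2, if_pos]
      rw [Real.exp_log (div_pos hi.2 (hQ_pos i)),
        mul_div_cancel₀ _ (ne_of_gt (hQ_pos i))]
    have e3 : ∑ i ∈ univ.filter (fun i => ¬ 0 < P i), Q i * Real.exp (x i)
        = c * Real.exp (-t) := by
      rw [hc, Finset.sum_mul]
      apply Finset.sum_congr rfl
      intro i hi
      simp only [Finset.mem_filter] at hi
      rw [hx]
      simp [hi.2]
    rw [e1, e3]
  have hfx : klDiv P Q ≤ f x + ε := by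
    rw [hf]
    dsimp only
    rw [hsum1, hsum2]
    have hpos : (0:ℝ) < 1 + c * Real.exp (-t) := by positivity
    have hlog : Real.log (1 + c * Real.exp (-t)) ≤ c * Real.exp (-t) := by
      have := Real.log_le_sub_one_of_pos hpos
      linarith
    have hce : c * Real.exp (-t) ≤ ε := by
      have hc1 : c ≤ 1 := by
        rw [hc, ← hQ_sum]
        exact Finset.sum_le_sum_of_subset_of_nonneg (Finset.filter_subset _ _)
          (fun i _ _ => (hQ_pos i).le)
      have het : Real.exp (-t) = ε := by
        rw [ht, neg_neg, Real.exp_log hε]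
      rw [het]
      nlinarith
    linarith
  calc klDiv P Q ≤ f x + ε := hfx
    _ ≤ (⨆ x : α → ℝ, f x) + ε := by
        gcongr
        exact le_ciSup hbdd x
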